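/- Let r^(1),...,r^(ρ) ∈ (0,1)^d be incomparable points with no coordinate ties, S their record-setting region with generator set G, and T ⊆ [d]. Then the set G_T of generators whose set of nonzero coordinates equals T is exactly the image under the injection ι_T of the set of interior generators of the projected point family {π_T(r^(i)) : i ∈ [ρ]} ⊂ (0,1)^{|T|}. -/
import Mathlib


open Set

/-- The record-setting region of the points `r 0, …, r (ρ-1)` within `[0,1)^d`. -/
def recordSet {d ρ : ℕ} (r : Fin ρ → Fin d → ℝ) : Set (Fin d → ℝ) :=
  {x | (∀ j, x j ∈ Set.Ico (0:ℝ) 1) ∧ ∀ i, ¬ ∀ j, x j < r i j}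

/-- The generators: minimal elements of the record-setting region. -/
def generators {d ρ : ℕ} (r : Fin ρ → Fin d → ℝ) : Set (Fin d → ℝ) :=
  {g | g ∈ recordSet r ∧ ∀ y ∈ recordSet r, y ≤ g → y = g}

theorem generators_with_support_T (d ρ : ℕ)
    (r : Fin ρ → Fin d → ℝ)
    (hr : ∀ i j, r i j ∈ Set.Ioo (0:ℝ) 1)
    (hties : ∀ j : Fin d, Function.Injective (fun i => r i j))
    (hinc : ∀ i i' : Fin ρ, i ≠ i' → ¬ r i ≤ r i')
    (T : Finset (Fin d)) :
    {g | g ∈ generators r ∧ {j : Fin d | g j ≠ 0} = ↑T} =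
      (fun y : Fin T.card → ℝ => fun j : Fin d =>
          if h : j ∈ T then y ((T.orderIsoOfFin rfl).symm ⟨j, h⟩) else 0) ''
        {y : Fin T.card → ℝ |
          y ∈ generators (fun i m => r i ((T.orderIsoOfFin rfl) m)) ∧ ∀ m, y m ≠ 0} := by
  classical
  set e := T.orderIsoOfFin rfl with he
  have key : ∀ x : Fin d → ℝ, (∀ j, j ∉ T → x j = 0) →
      (x ∈ recordSet r ↔ (fun m => x (e m)) ∈ recordSet (fun i m => r i (e m))) := by
    intro x hx
    constructor
    · rintro ⟨h1, h2⟩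
      refine ⟨fun m => h1 (e m), fun i hall => h2 i (fun j => ?_)⟩
      by_cases hj : j ∈ T
      · have := hall (e.symm ⟨j, hj⟩)
        simpa using this
      · rw [hx j hj]; exact (hr i j).1
    · rintro ⟨h1, h2⟩
      refine ⟨fun j => ?_, fun i hall => h2 i (fun m => hall (e m))⟩
      by_cases hj : j ∈ T
      · have := h1 (e.symm ⟨j, hj⟩)
        simpa using this
      · rw [hx j hj]; exact ⟨le_refl 0, zero_lt_one⟩
  ext g
  simp only [Set.mem_setOf_eq, Set.mem_image]
  constructor
  · rintro ⟨⟨hgS, hgmin⟩, hsupp⟩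
    have hg0 : ∀ j, j ∉ T → g j = 0 := by
      intro j hj
      by_contra h
      exact hj (by have : j ∈ ({j | g j ≠ 0} : Set (Fin d)) := h; rwa [hsupp] at this)
    refine ⟨fun m => g (e m), ⟨⟨(key g hg0).mp hgS, ?_⟩, ?_⟩, ?_⟩
    · intro z hz hzle
      set x : Fin d → ℝ := fun j => if h : j ∈ T then z (e.symm ⟨j, h⟩) else 0 with hxdef
      have hx0 : ∀ j, j ∉ T → x j = 0 := fun j hj => dif_neg hj
      have hxproj : (fun m => x (e m)) = z := by
        funext m
        simp [hxdef]
      have hxS : x ∈ recordSet r := (key x hx0).mpr (by rw [hxproj]; exact hz)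
      have hxle : x ≤ g := by
        intro j
        by_cases hj : j ∈ T
        · simp only [hxdef, dif_pos hj]
          have := hzle (e.symm ⟨j, hj⟩)
          simpa using this
        · rw [hx0 j hj, hg0 j hj]
      have hxg := hgmin x hxS hxle
      funext m
      rw [← hxproj]
      simp [hxg]
    · intro m
      have hm : (e m : Fin d) ∈ ({j | g j ≠ 0} : Set (Fin d)) := by
        rw [hsupp]; exact_mod_cast (e m).2
      exact hm
    · funext j
      by_cases hj : j ∈ T
      · simp only [dif_pos hj]
        have : (e (e.symm ⟨j, hj⟩) : Fin d) = j := by simp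
        rw [this]
      · rw [dif_neg hj, hg0 j hj]
  · rintro ⟨y, ⟨⟨hyS, hymin⟩, hy0⟩, rfl⟩
    set x : Fin d → ℝ := fun j => if h : j ∈ T then y (e.symm ⟨j, h⟩) else 0 with hxdef
    have hx0 : ∀ j, j ∉ T → x j = 0 := fun j hj => dif_neg hj
    have hxproj : (fun m => x (e m)) = y := by
      funext m
      simp [hxdef]
    have hxS : x ∈ recordSet r := (key x hx0).mpr (by rw [hxproj]; exact hyS)
    constructor
    · refine ⟨hxS, ?_⟩
      intro z hz hzle
      have hz0 : ∀ j, j ∉ T → z j = 0 := by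
        intro j hj
        have h1 : z j ≤ x j := hzle j
        have h2 : (0:ℝ) ≤ z j := (hz.1 j).1
        rw [hx0 j hj] at h1
        linarith
      have hzS' : (fun m => z (e m)) ∈ recordSet (fun i m => r i (e m)) :=
        (key z hz0).mp hz
      have hzley : (fun m => z (e m)) ≤ y := by
        intro m
        have := hzle (e m : Fin d)
        rw [← hxproj]
        exact this
      have hzy := hymin _ hzS' hzley
      funext j
      by_cases hj : j ∈ T
      · have h1 : z (e (e.symm ⟨j, hj⟩) : Fin d) = y (e.symm ⟨j, hj⟩) := congrFun hzy _
        have h2 : (e (e.symm ⟨j, hj⟩) : Fin d) = j := by simp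
        rw [h2] at h1
        rw [h1, hxdef]
        simp [dif_pos hj]
      · rw [hz0 j hj, hx0 j hj]
    · ext j
      simp only [Set.mem_setOf_eq, Finset.coe_sort_coe, Finset.mem_coe]
      constructor
      · intro hne
        by_contra hj
        exact hne (hx0 j hj)
      · intro hj
        rw [hxdef]
        simp only [dif_pos hj]
        exact hy0 _
  done
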